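/- Let m ≥ 4 and let G = ⟨a, b | a^{2^{m-2}} = 1, b^4 = 1, b^{-1}ab = a^{1+2^{m-3}}⟩ (the group G_1). Then G has order 2^m, its commutator subgroup is ⟨a^{2^{m-3}}⟩ of order 2, its center is ⟨a^2, b^2⟩ ≅ C_{2^{m-3}} × C_2, and its nilpotency class is 2. -/

import Mathlib

open scoped commutatorElement


/-- The nilpotency class of a group, as the least `n` with `γ_{n+1}(G) = 1`. -/
noncomputable def nilClass (G : Type*) [Group G] : ℕ :=
  sInf {n : ℕ | (⊤ : Subgroup G).lowerCentralSeries n = ⊥}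

/-- Relators of `G₁ = ⟨a, b ∣ a^{2^{m-2}} = 1, b⁴ = 1, b⁻¹ab = a^{1+2^{m-3}}⟩`. -/
def G1rels (m : ℕ) : Set (FreeGroup (Fin 2)) :=
  { FreeGroup.of 0 ^ (2 ^ (m - 2)),
    FreeGroup.of 1 ^ 4,
    (FreeGroup.of 1)⁻¹ * FreeGroup.of 0 * FreeGroup.of 1
      * FreeGroup.of 0 ^ (-(1 + 2 ^ (m - 3) : ℤ)) }


namespace G1aux

/-- Powers with exponents congruent mod an annihilator agree. -/
lemma pow_eq_pow_mod_two {G : Type*} [Monoid G] {g : G} (h : g ^ 2 = 1) {a b : ℕ}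
    (hab : a % 2 = b % 2) : g ^ a = g ^ b := by
  conv_lhs => rw [← Nat.div_add_mod a 2, pow_add, pow_mul, h, one_pow]
  conv_rhs => rw [← Nat.div_add_mod b 2, pow_add, pow_mul, h, one_pow]
  rw [hab]

/-- The canonical hom `Multiplicative (ZMod n) →* G` sending `1` to `g` with `g ^ n = 1`. -/
def zmodPowHom {G : Type*} [Group G] (n : ℕ) [NeZero n] (g : G) (hg : g ^ n = 1) :
    Multiplicative (ZMod n) →* G where
  toFun x := g ^ (ZMod.val x.toAdd)
  map_one' := by simp [ZMod.val_zero]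
  map_mul' x y := by
    show g ^ ((x.toAdd + y.toAdd).val) = g ^ x.toAdd.val * g ^ y.toAdd.val
    rw [ZMod.val_add, ← pow_eq_pow_mod _ hg, pow_add]

lemma zmodPowHom_apply {G : Type*} [Group G] (n : ℕ) [NeZero n] (g : G) (hg : g ^ n = 1)
    (x : ZMod n) : zmodPowHom n g hg (.ofAdd x) = g ^ x.val := rfl

lemma zpow_eq_pow_val {G : Type*} [Group G] {g : G} {n : ℕ} [NeZero n] (hg : g ^ n = 1)
    (z : ℤ) : g ^ z = g ^ ((z : ZMod n)).val := by
  have h1 : ((((z : ZMod n)).val : ℤ)) = z % n := ZMod.val_intCast z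
  have : g ^ z = g ^ (z % n + n * (z / n)) := by rw [show z % (n:ℤ) + n * (z / n) = z from Int.emod_add_mul_ediv z n]
  rw [this, zpow_add, zpow_mul, zpow_natCast, hg, one_zpow, mul_one, ← h1, zpow_natCast]

/-- Hom ext for `Multiplicative (ZMod n)`. -/
lemma mhom_ext {n : ℕ} [NeZero n] {X : Type*} [Monoid X]
    {f g : Multiplicative (ZMod n) →* X}
    (h : f (.ofAdd 1) = g (.ofAdd 1)) : f = g := by
  refine MonoidHom.ext fun x => ?_
  have hx : x = (Multiplicative.ofAdd (1 : ZMod n)) ^ (x.toAdd.val) := by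
    rw [← ofAdd_nsmul, nsmul_eq_mul, mul_one]
    exact congrArg Multiplicative.ofAdd (ZMod.natCast_rightInverse x.toAdd).symm
  rw [hx, map_pow, map_pow, h]

end G1aux

namespace G1test
section
variable (k : ℕ)

def s : ZMod (2 ^ (k + 2)) := 2 ^ (k + 1)
def t : ZMod (2 ^ (k + 2)) := 1 + s k

lemma two_pow_top : (2 : ZMod (2 ^ (k+2))) ^ (k + 2) = 0 := by
  have : ((2 ^ (k+2) : ℕ) : ZMod (2 ^ (k+2))) = 0 := ZMod.natCast_self _
  push_cast at this
  exact this

lemma two_mul_s : 2 * s k = 0 := by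
  calc 2 * s k = 2 ^ (k+2) := by rw [s]; ring
    _ = 0 := two_pow_top k

lemma s_mul_s : s k * s k = 0 := by
  calc s k * s k = 2 ^ (k+2) * 2 ^ k := by rw [s]; ring
    _ = 0 := by rw [two_pow_top, zero_mul]

lemma t_mul_t : t k * t k = 1 := by
  calc t k * t k = 1 + (2 * s k + s k * s k) := by rw [t]; ring
    _ = 1 := by rw [two_mul_s, s_mul_s]; ring

lemma t_pow (v : ℕ) : ∃ c, t k ^ v = 1 + s k * c := by
  induction v with
  | zero => exact ⟨0, by simp⟩
  | succ n ih =>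
    obtain ⟨c, hc⟩ := ih
    refine ⟨c + 1, ?_⟩
    calc t k ^ (n+1) = (1 + s k * c) * (1 + s k) := by rw [pow_succ (t k) n, hc]; rfl
      _ = 1 + s k * (c + 1) + (s k * s k) * c := by ring
      _ = 1 + s k * (c + 1) := by rw [s_mul_s]; ring

lemma t_pow_even {v : ℕ} (hv : v % 2 = 0) : t k ^ v = 1 := by
  calc t k ^ v = t k ^ 0 :=
        G1aux.pow_eq_pow_mod_two (by rw [pow_two]; exact t_mul_t k) (by omega)
    _ = 1 := pow_zero _

lemma t_pow_odd {v : ℕ} (hv : v % 2 = 1) : t k ^ v = t k := by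
  calc t k ^ v = t k ^ 1 :=
        G1aux.pow_eq_pow_mod_two (by rw [pow_two]; exact t_mul_t k) (by omega)
    _ = t k := pow_one _

lemma s_ne_zero : s k ≠ 0 := by
  rw [s, show ((2:ZMod (2^(k+2))) ^ (k+1)) = ((2 ^ (k+1) : ℕ) : ZMod (2^(k+2))) from by push_cast; ring]
  rw [Ne, ZMod.natCast_eq_zero_iff]
  intro h
  have := Nat.le_of_dvd (by positivity) h
  have h2 : 2 ^ (k+1) < 2 ^ (k+2) := Nat.pow_lt_pow_right (by norm_num) (by omega)
  omega

end
end G1test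

namespace G1test
section
variable (k : ℕ)

/-- Multiplication by `t` as an additive automorphism of `ZMod (2^(k+2))`. -/
def alpha : ZMod (2 ^ (k + 2)) ≃+ ZMod (2 ^ (k + 2)) where
  toFun x := t k * x
  invFun x := t k * x
  left_inv x := by show t k * (t k * x) = x; rw [← mul_assoc, t_mul_t, one_mul]
  right_inv x := by show t k * (t k * x) = x; rw [← mul_assoc, t_mul_t, one_mul]
  map_add' x y := mul_add _ _ _

abbrev M := Multiplicative (ZMod (2 ^ (k + 2)))
abbrev Q := Multiplicative (ZMod 4)

def alphaM : MulAut (M k) := AddEquiv.toMultiplicative (alpha k)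

lemma alphaM_apply (x : ZMod (2 ^ (k+2))) :
    alphaM k (.ofAdd x) = .ofAdd (t k * x) := rfl

lemma alphaM_pow_apply (v : ℕ) : ∀ x : ZMod (2 ^ (k+2)),
    (alphaM k ^ v) (.ofAdd x) = .ofAdd (t k ^ v * x) := by
  induction v with
  | zero => intro x; simp
  | succ n ih =>
    intro x
    rw [pow_succ (alphaM k) n]
    show (alphaM k ^ n) (alphaM k (.ofAdd x)) = _
    rw [alphaM_apply, ih (t k * x), pow_succ (t k) n, mul_assoc]

lemma alphaM_sq : alphaM k ^ 2 = 1 := by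
  ext x
  show ((alphaM k ^ 2) (.ofAdd x.toAdd)).toAdd = _
  rw [alphaM_pow_apply, pow_two, t_mul_t, one_mul]
  rfl

/-- The action of `ZMod 4` on `ZMod (2^(k+2))`. -/
def phi : Q →* MulAut (M k) where
  toFun j := alphaM k ^ (ZMod.val j.toAdd)
  map_one' := by
    show alphaM k ^ (ZMod.val (0 : ZMod 4)) = 1
    rw [ZMod.val_zero, pow_zero]
  map_mul' i j := by
    show alphaM k ^ ((i.toAdd + j.toAdd).val) = _
    rw [ZMod.val_add]
    exact (G1aux.pow_eq_pow_mod_two (alphaM_sq k)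
      (by omega)).trans (pow_add _ _ _)

lemma phi_apply (j : ZMod 4) (x : ZMod (2 ^ (k+2))) :
    phi k (.ofAdd j) (.ofAdd x) = .ofAdd (t k ^ j.val * x) := alphaM_pow_apply k _ x

/-- The model group. -/
abbrev K := SemidirectProduct (M k) Q (phi k)

def A : K k := SemidirectProduct.inl (Multiplicative.ofAdd 1)
def B : K k := SemidirectProduct.inr (Multiplicative.ofAdd 1)

lemma A_pow (n : ℕ) : A k ^ n = SemidirectProduct.inl (Multiplicative.ofAdd (n : ZMod (2^(k+2)))) := by
  rw [A, ← map_pow]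
  congr 1
  rw [← ofAdd_nsmul, nsmul_eq_mul, mul_one]

lemma B_pow (n : ℕ) : B k ^ n = SemidirectProduct.inr (Multiplicative.ofAdd (n : ZMod 4)) := by
  rw [B, ← map_pow]
  congr 1
  rw [← ofAdd_nsmul, nsmul_eq_mul, mul_one]

lemma A_zpow (z : ℤ) : A k ^ z = SemidirectProduct.inl (Multiplicative.ofAdd (z : ZMod (2^(k+2)))) := by
  rw [A, ← map_zpow]
  congr 1
  rw [← ofAdd_zsmul, zsmul_eq_mul, mul_one]

end
end G1test

namespace G1test
section
variable (k : ℕ)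

/-- relator is 1 in the presented group -/
lemma mk_rel_eq_one {α : Type*} {rels : Set (FreeGroup α)} {r : FreeGroup α} (hr : r ∈ rels) :
    PresentedGroup.mk rels r = 1 :=
  (QuotientGroup.eq_one_iff r).mpr (Subgroup.subset_normalClosure hr)

def fgen : Fin 2 → K k := ![A k, B k]

lemma relhold : ∀ r ∈ G1rels (k + 4), FreeGroup.lift (fgen k) r = 1 := by
  intro r hr
  rcases hr with h | h | h
  · rw [h, map_pow, FreeGroup.lift_apply_of]
    show A k ^ (2 ^ (k + 2)) = 1
    rw [A_pow, ZMod.natCast_self]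
    rfl
  · rw [h, map_pow, FreeGroup.lift_apply_of]
    show B k ^ (4 : ℕ) = 1
    rw [B_pow, show ((4:ℕ) : ZMod 4) = 0 from by decide]
    rfl
  · rw [Set.mem_singleton_iff] at h
    rw [h]
    simp only [map_mul, map_inv, map_zpow, FreeGroup.lift_apply_of]
    show (B k)⁻¹ * A k * B k * A k ^ (-(1 + 2 ^ (k + 1) : ℤ)) = 1
    have key : (B k)⁻¹ * A k * B k = A k ^ ((1 + 2 ^ (k + 1) : ℤ)) := by
      rw [A_zpow]
      have := (SemidirectProduct.inl_aut_inv (φ := phi k) (Multiplicative.ofAdd (1 : ZMod 4))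
        (Multiplicative.ofAdd (1 : ZMod (2^(k+2)))))
      rw [B, A, show (SemidirectProduct.inr (φ := phi k) (Multiplicative.ofAdd (1:ZMod 4)))⁻¹
            = SemidirectProduct.inr (Multiplicative.ofAdd (1:ZMod 4))⁻¹ from (map_inv _ _).symm,
          ← this]
      congr 1
      rw [← map_inv (phi k), show (Multiplicative.ofAdd (1 : ZMod 4))⁻¹
            = Multiplicative.ofAdd (-1 : ZMod 4) from rfl]
      rw [phi_apply, show ((-1 : ZMod 4)).val = 3 from by decide,
        t_pow_odd k (by norm_num), mul_one]
      congr 1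
      rw [t, s]
      push_cast
      ring
    rw [key, ← zpow_add, add_neg_cancel, zpow_zero]

def piHom : PresentedGroup (G1rels (k + 4)) →* K k := PresentedGroup.toGroup (relhold k)

end
end G1test

namespace G1test
section
variable (k : ℕ)

abbrev G := PresentedGroup (G1rels (k + 4))
def a : G k := PresentedGroup.of 0
def b : G k := PresentedGroup.of 1

/-- integer exponent -/
abbrev T : ℤ := 1 + 2 ^ (k + 1)

lemma ha : a k ^ (2 ^ (k + 2)) = 1 := by
  have h := mk_rel_eq_one (rels := G1rels (k+4))
    (r := FreeGroup.of 0 ^ (2 ^ (k + 4 - 2))) (Or.inl rfl)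
  rw [map_pow] at h
  exact h

lemma hb : b k ^ (4 : ℕ) = 1 := by
  have h := mk_rel_eq_one (rels := G1rels (k+4))
    (r := FreeGroup.of 1 ^ 4) (Or.inr (Or.inl rfl))
  rw [map_pow] at h
  exact h

lemma hconj : (b k)⁻¹ * a k * b k = a k ^ (T k) := by
  have h := mk_rel_eq_one (rels := G1rels (k+4))
    (r := (FreeGroup.of 1)⁻¹ * FreeGroup.of 0 * FreeGroup.of 1
      * FreeGroup.of 0 ^ (-(1 + 2 ^ (k + 4 - 3) : ℤ))) (Or.inr (Or.inr rfl))
  simp only [map_mul, map_inv, map_zpow] at h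
  have h2 : (b k)⁻¹ * a k * b k * (a k) ^ (-(T k)) = 1 := h
  calc (b k)⁻¹ * a k * b k
      = (b k)⁻¹ * a k * b k * (a k) ^ (-(T k)) * (a k) ^ (T k) := by
        rw [mul_assoc _ _ ((a k) ^ (T k)), ← zpow_add, neg_add_cancel, zpow_zero, mul_one]
    _ = (a k) ^ (T k) := by rw [h2, one_mul]

lemma conj_zpow_pow (j : ℕ) : ∀ z : ℤ, (b k ^ j)⁻¹ * a k ^ z * b k ^ j = a k ^ (T k ^ j * z) := by
  induction j with
  | zero => intro z; simp
  | succ n ih =>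
    intro z
    have step : ∀ w : ℤ, (b k)⁻¹ * a k ^ w * b k = a k ^ (T k * w) := by
      intro w
      have cz : ((b k)⁻¹ * a k * ((b k)⁻¹)⁻¹) ^ w = (b k)⁻¹ * a k ^ w * ((b k)⁻¹)⁻¹ :=
        conj_zpow
      rw [inv_inv] at cz
      rw [← cz, hconj, ← zpow_mul]
    calc (b k ^ (n+1))⁻¹ * a k ^ z * b k ^ (n+1)
        = (b k ^ n)⁻¹ * ((b k)⁻¹ * a k ^ z * b k) * b k ^ n := by
          rw [pow_succ (b k) n]; group
      _ = (b k ^ n)⁻¹ * a k ^ (T k * z) * b k ^ n := by rw [step z]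
      _ = a k ^ (T k ^ n * (T k * z)) := ih _
      _ = a k ^ (T k ^ (n+1) * z) := by congr 1; ring

lemma conj_pow_back (v : ℕ) (hv : v ≤ 4) (z : ℤ) :
    b k ^ v * a k ^ z * (b k ^ v)⁻¹ = a k ^ (T k ^ (4 - v) * z) := by
  have hbv : b k ^ v = (b k ^ (4 - v))⁻¹ := by
    apply eq_inv_of_mul_eq_one_left
    rw [← pow_add, show v + (4 - v) = 4 from by omega, hb]
  rw [hbv, inv_inv]
  exact conj_zpow_pow k (4 - v) z

def f1 : M k →* G k := G1aux.zmodPowHom (2 ^ (k + 2)) (a k) (ha k)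
def f2 : Q →* G k := G1aux.zmodPowHom 4 (b k) (hb k)

lemma cast_T : ((T k : ℤ) : ZMod (2 ^ (k + 2))) = t k := by
  rw [T, t, s]; push_cast; ring

lemma compat : ∀ g : Q, (f1 k).comp ((phi k) g).toMonoidHom
    = (MulAut.conj ((f2 k) g)).toMonoidHom.comp (f1 k) := by
  intro g
  apply G1aux.mhom_ext
  set v := (g.toAdd).val with hv
  have hv4 : v < 4 := ZMod.val_lt _
  show f1 k ((phi k) g (.ofAdd 1)) = f2 k g * f1 k (.ofAdd 1) * (f2 k g)⁻¹
  have e1 : (phi k) g (.ofAdd (1 : ZMod (2^(k+2)))) = .ofAdd (t k ^ v) := by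
    have := phi_apply k g.toAdd 1
    rw [mul_one] at this
    exact this
  have e2 : f1 k (.ofAdd (t k ^ v)) = a k ^ ((t k ^ v).val) := rfl
  have e3 : f1 k (.ofAdd (1 : ZMod (2^(k+2)))) = a k := by
    show a k ^ ((1 : ZMod (2^(k+2))).val) = a k
    rw [show ((1 : ZMod (2^(k+2))).val) = 1 from ?_, pow_one]
    rw [show ((1 : ZMod (2^(k+2)))) = ((1:ℕ) : ZMod (2^(k+2))) from by push_cast; rfl]
    exact ZMod.val_cast_of_lt (by have := Nat.one_lt_two_pow_iff (n := k+2); omega)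
  have e4 : f2 k g = b k ^ v := rfl
  rw [e1, e2, e3, e4]
  have e5 := conj_pow_back k v (by omega) 1
  rw [zpow_one] at e5
  rw [e5]
  have e6 : a k ^ (T k ^ (4 - v) * 1) = a k ^ (((T k ^ (4-v) * 1 : ℤ) : ZMod (2^(k+2))).val) :=
    G1aux.zpow_eq_pow_val (ha k) _
  rw [e6]
  congr 2
  push_cast [cast_T]
  rw [mul_one]
  exact (G1aux.pow_eq_pow_mod_two (by rw [pow_two]; exact t_mul_t k) (by omega)).symm

def rhoHom : K k →* G k := SemidirectProduct.lift (f1 k) (f2 k) (compat k)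

lemma rho_pi : (rhoHom k).comp (piHom k) = MonoidHom.id _ := by
  apply PresentedGroup.ext
  intro x
  fin_cases x
  · show rhoHom k (piHom k (a k)) = a k
    rw [show piHom k (a k) = A k from PresentedGroup.toGroup.of (relhold k), A]
    simp only [rhoHom, SemidirectProduct.lift_inl]
    show a k ^ ((1 : ZMod (2^(k+2))).val) = a k
    rw [show ((1 : ZMod (2^(k+2)))) = ((1:ℕ) : ZMod (2^(k+2))) from by push_cast; rfl,
      ZMod.val_cast_of_lt (by have := Nat.one_lt_two_pow_iff (n := k+2); omega), pow_one]
  · show rhoHom k (piHom k (b k)) = b k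
    rw [show piHom k (b k) = B k from PresentedGroup.toGroup.of (relhold k), B]
    simp only [rhoHom, SemidirectProduct.lift_inr]
    show b k ^ ((1 : ZMod 4).val) = b k
    rw [show ((1 : ZMod 4)).val = 1 from by decide, pow_one]

lemma pi_rho : (piHom k).comp (rhoHom k) = MonoidHom.id _ := by
  apply SemidirectProduct.hom_ext
  · apply G1aux.mhom_ext
    show piHom k (rhoHom k (SemidirectProduct.inl (.ofAdd 1))) = SemidirectProduct.inl (.ofAdd 1)
    simp only [rhoHom, SemidirectProduct.lift_inl]
    show piHom k (a k ^ ((1 : ZMod (2^(k+2))).val)) = A k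
    rw [show ((1 : ZMod (2^(k+2)))) = ((1:ℕ) : ZMod (2^(k+2))) from by push_cast; rfl,
      ZMod.val_cast_of_lt (by have := Nat.one_lt_two_pow_iff (n := k+2); omega), pow_one]
    exact PresentedGroup.toGroup.of (relhold k)
  · apply G1aux.mhom_ext
    show piHom k (rhoHom k (SemidirectProduct.inr (.ofAdd 1))) = SemidirectProduct.inr (.ofAdd 1)
    simp only [rhoHom, SemidirectProduct.lift_inr]
    show piHom k (b k ^ ((1 : ZMod 4).val)) = B k
    rw [show ((1 : ZMod 4)).val = 1 from by decide, pow_one]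
    exact PresentedGroup.toGroup.of (relhold k)

/-- The isomorphism between the presented group and the model. -/
def eIso : G k ≃* K k := (piHom k).toMulEquiv (rhoHom k) (rho_pi k) (pi_rho k)

end
end G1test

namespace G1test
section
variable (k : ℕ)

lemma phi_apply' (r : Q) (l : M k) :
    phi k r l = .ofAdd (t k ^ r.toAdd.val * l.toAdd) := phi_apply k _ _

lemma ml (u v : K k) :
    (u * v).left.toAdd = u.left.toAdd + t k ^ (u.right.toAdd.val) * v.left.toAdd := by
  show (u.left * phi k u.right v.left).toAdd = _
  rw [phi_apply']
  rfl

lemma mr (u v : K k) : (u * v).right.toAdd = u.right.toAdd + v.right.toAdd := rfl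

lemma il (u : K k) :
    (u⁻¹).left.toAdd = t k ^ ((-u.right.toAdd).val) * (-u.left.toAdd) := by
  show (phi k u.right⁻¹ u.left⁻¹).toAdd = _
  rw [phi_apply']
  rfl

lemma ir (u : K k) : (u⁻¹).right.toAdd = -u.right.toAdd := rfl

lemma t_val_add (i j : ZMod 4) : t k ^ ((i + j).val) = t k ^ i.val * t k ^ j.val := by
  rw [← pow_add]
  refine G1aux.pow_eq_pow_mod_two (by rw [pow_two]; exact t_mul_t k) ?_
  have h := ZMod.val_add i j
  omega

lemma t_val_neg (i : ZMod 4) : t k ^ ((-i).val) = t k ^ i.val := by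
  refine G1aux.pow_eq_pow_mod_two (by rw [pow_two]; exact t_mul_t k) ?_
  have h : ((-i) + i).val = ((-i).val + i.val) % 4 := ZMod.val_add _ _
  rw [neg_add_cancel, ZMod.val_zero] at h
  have h2 : (-i).val < 4 := ZMod.val_lt _
  have h3 : i.val < 4 := ZMod.val_lt _
  omega

def Zs : Subgroup (K k) := Subgroup.zpowers (SemidirectProduct.inl (.ofAdd (s k)))

lemma mem_Zs (c : ZMod (2 ^ (k + 2))) :
    (SemidirectProduct.inl (.ofAdd (s k * c)) : K k) ∈ Zs k := by
  refine ⟨(c.val : ℤ), ?_⟩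
  show SemidirectProduct.inl (Multiplicative.ofAdd (s k)) ^ ((c.val : ℕ) : ℤ) = _
  rw [zpow_natCast, ← map_pow]
  congr 1
  rw [← ofAdd_nsmul, nsmul_eq_mul]
  congr 1
  rw [ZMod.natCast_rightInverse c, mul_comm]

lemma right_comm (u v : Q) : u * v * u⁻¹ * v⁻¹ = 1 := by
  rw [mul_comm u v]; group

lemma commutator_mem (g h : K k) : ⁅g, h⁆ ∈ Zs k := by
  obtain ⟨ci, hci⟩ := t_pow k (g.right.toAdd.val)
  obtain ⟨cj, hcj⟩ := t_pow k (h.right.toAdd.val)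
  have hR : (⁅g, h⁆).right = 1 := right_comm _ _
  have hL : (⁅g, h⁆).left.toAdd
      = s k * (ci * h.left.toAdd - cj * g.left.toAdd) := by
    show ((g * h * g⁻¹) * h⁻¹).left.toAdd = _
    simp only [ml, mr, il, ir]
    rw [show g.right.toAdd + h.right.toAdd + -g.right.toAdd = h.right.toAdd from by ring]
    rw [t_val_add, t_val_neg, t_val_neg]
    have hPP : t k ^ g.right.toAdd.val * t k ^ g.right.toAdd.val = 1 := by
      rw [← pow_add]; exact t_pow_even k (by omega)
    have hQQ : t k ^ h.right.toAdd.val * t k ^ h.right.toAdd.val = 1 := by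
      rw [← pow_add]; exact t_pow_even k (by omega)
    calc g.left.toAdd + t k ^ g.right.toAdd.val * h.left.toAdd
          + (t k ^ g.right.toAdd.val * t k ^ h.right.toAdd.val)
            * (t k ^ g.right.toAdd.val * -g.left.toAdd)
          + t k ^ h.right.toAdd.val * (t k ^ h.right.toAdd.val * -h.left.toAdd)
        = g.left.toAdd + t k ^ g.right.toAdd.val * h.left.toAdd
          + (t k ^ g.right.toAdd.val * t k ^ g.right.toAdd.val)
            * (t k ^ h.right.toAdd.val * -g.left.toAdd)
          + (t k ^ h.right.toAdd.val * t k ^ h.right.toAdd.val) * -h.left.toAdd := by ring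
      _ = g.left.toAdd + t k ^ g.right.toAdd.val * h.left.toAdd
          + t k ^ h.right.toAdd.val * -g.left.toAdd + -h.left.toAdd := by
            rw [hPP, hQQ]; ring
      _ = s k * (ci * h.left.toAdd - cj * g.left.toAdd) := by
            rw [hci, hcj]; ring
  have : ⁅g, h⁆ = SemidirectProduct.inl
      (.ofAdd (s k * (ci * h.left.toAdd - cj * g.left.toAdd))) := by
    refine SemidirectProduct.ext ?_ ?_
    · rw [← hL]; rfl
    · rw [hR]; rfl
  rw [this]
  exact mem_Zs k _

lemma comm_AB : ⁅A k, B k⁆ = SemidirectProduct.inl (.ofAdd (s k)) := by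
  have h2 : phi k (.ofAdd (1 : ZMod 4)) ((Multiplicative.ofAdd (1 : ZMod (2^(k+2))))⁻¹)
      = Multiplicative.ofAdd (-(t k)) := by
    rw [show (Multiplicative.ofAdd (1 : ZMod (2^(k+2))))⁻¹
        = Multiplicative.ofAdd (-1 : ZMod (2^(k+2))) from rfl, phi_apply]
    rw [show ((1 : ZMod 4)).val = 1 from by decide, pow_one]
    rw [mul_neg_one]
  have hinv : (A k)⁻¹
      = SemidirectProduct.inl ((Multiplicative.ofAdd (1 : ZMod (2^(k+2))))⁻¹) := by
    rw [A, ← map_inv]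
  have hBAB : B k * (A k)⁻¹ * (B k)⁻¹
      = SemidirectProduct.inl (Multiplicative.ofAdd (-(t k))) := by
    rw [hinv, B, show (SemidirectProduct.inr (Multiplicative.ofAdd (1:ZMod 4)) : K k)⁻¹
      = SemidirectProduct.inr ((Multiplicative.ofAdd (1:ZMod 4))⁻¹) from (map_inv _ _).symm,
      ← SemidirectProduct.inl_aut, h2]
  calc ⁅A k, B k⁆ = A k * (B k * (A k)⁻¹ * (B k)⁻¹) := by
        rw [commutatorElement_def]; group
    _ = A k * SemidirectProduct.inl (Multiplicative.ofAdd (-(t k))) := by rw [hBAB]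
    _ = SemidirectProduct.inl (Multiplicative.ofAdd (1 + -(t k))) := by
        rw [A, ← map_mul]; rfl
    _ = SemidirectProduct.inl (.ofAdd (s k)) := by
        have h4 : (1 : ZMod (2^(k+2))) + -(t k) = s k := by
          rw [t]; linear_combination -two_mul_s k
        rw [h4]

lemma commutator_K : commutator (K k) = Zs k := by
  apply le_antisymm
  · rw [commutator_def, Subgroup.commutator_le]
    exact fun g _ h _ => commutator_mem k g h
  · rw [Zs, Subgroup.zpowers_le, ← comm_AB]
    exact Subgroup.commutator_mem_commutator (Subgroup.mem_top _) (Subgroup.mem_top _)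

lemma order_gen : orderOf (SemidirectProduct.inl (.ofAdd (s k)) : K k) = 2 := by
  refine orderOf_eq_prime ?_ ?_
  · rw [← map_pow]
    rw [show (Multiplicative.ofAdd (s k)) ^ 2 = Multiplicative.ofAdd (2 * s k) from by
      rw [← ofAdd_nsmul, nsmul_eq_mul]; norm_num]
    rw [two_mul_s k]
    exact map_one _
  · intro hcon
    apply s_ne_zero k
    have := SemidirectProduct.inl_injective (φ := phi k)
      (a₁ := Multiplicative.ofAdd (s k)) (a₂ := 1) hcon
    exact (Multiplicative.ofAdd.injective (by simpa using this) : s k = 0)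

end
end G1test

namespace G1test
section
variable (k : ℕ)

def C1 : K k := SemidirectProduct.inl (.ofAdd 2)
def C2 : K k := SemidirectProduct.inr (.ofAdd 2)

lemma s_mul_two : s k * 2 = 0 := by
  rw [mul_comm]; exact two_mul_s k

lemma t_pow_mul_even (v : ℕ) (u : ZMod (2 ^ (k+2))) : t k ^ v * (2 * u) = 2 * u := by
  obtain ⟨c, hc⟩ := t_pow k v
  rw [hc]
  have := s_mul_two k
  linear_combination (c * u) * s_mul_two k

lemma t_ne_one : t k ≠ 1 := by
  rw [t]
  intro hcon
  exact s_ne_zero k (by linear_combination hcon)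

/-- characterization of the center of the model group -/
lemma mem_center_iff' (w : K k) : w ∈ Subgroup.center (K k) ↔
    (∃ u, w.left.toAdd = 2 * u) ∧ (w.right.toAdd = 0 ∨ w.right.toAdd = 2) := by
  rw [Subgroup.mem_center_iff]
  constructor
  · intro h
    have hA := h (A k)
    have hB := h (B k)
    have hA' : (A k * w).left.toAdd = (w * A k).left.toAdd := by rw [hA]
    have hB' : (B k * w).left.toAdd = (w * B k).left.toAdd := by rw [hB]
    rw [ml, ml] at hA' hB'
    simp only [show (A k).left.toAdd = 1 from rfl, show (A k).right.toAdd = 0 from rfl,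
      show (B k).left.toAdd = 0 from rfl, show (B k).right.toAdd = 1 from rfl,
      ZMod.val_zero, pow_zero, one_mul, mul_one, mul_zero, add_zero,
      show ((1:ZMod 4)).val = 1 from by decide, pow_one] at hA' hB'
    -- hA' : 1 + w.left.toAdd = w.left.toAdd + t^(val w.right)
    -- hB' : t k * w.left.toAdd = w.left.toAdd
    constructor
    · -- x is even
      have hsx : s k * w.left.toAdd = 0 := by
        have : t k * w.left.toAdd = w.left.toAdd := by linear_combination hB'
        rw [t] at this
        linear_combination this
      -- cast to ℕ divisibility
      set x := w.left.toAdd with hx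
      have hcast : ((2 ^ (k+1) * x.val : ℕ) : ZMod (2 ^ (k+2))) = 0 := by
        push_cast
        rw [ZMod.natCast_rightInverse x]
        have : ((2:ZMod (2^(k+2))) ^ (k+1)) = s k := rfl
        rw [this]
        exact hsx
      rw [ZMod.natCast_eq_zero_iff] at hcast
      have hcast2 : 2 ^ (k+1) * 2 ∣ 2 ^ (k+1) * x.val := by
        rw [← pow_succ]; exact hcast
      have hdvd : 2 ∣ x.val :=
        (Nat.mul_dvd_mul_iff_left (Nat.pow_pos (by norm_num))).mp hcast2
      rcases hdvd with ⟨c, hc⟩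
      refine ⟨((c : ℕ) : ZMod (2 ^ (k+2))), ?_⟩
      calc x = ((x.val : ℕ) : ZMod (2 ^ (k+2))) := (ZMod.natCast_rightInverse x).symm
        _ = (((2 * c : ℕ) : ℕ) : ZMod (2 ^ (k+2))) := by rw [← hc]
        _ = 2 * ((c : ℕ) : ZMod (2 ^ (k+2))) := by push_cast; ring
    · -- i ∈ {0, 2}
      have ht1 : t k ^ (w.right.toAdd.val) = 1 := by linear_combination -hA'
      have hv : w.right.toAdd.val % 2 = 0 := by
        by_contra hodd
        have : w.right.toAdd.val % 2 = 1 := by omega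
        rw [t_pow_odd k this] at ht1
        exact t_ne_one k ht1
      have hlt : w.right.toAdd.val < 4 := ZMod.val_lt _
      have : w.right.toAdd.val = 0 ∨ w.right.toAdd.val = 2 := by omega
      rcases this with h0 | h2
      · left
        calc w.right.toAdd = ((w.right.toAdd.val : ℕ) : ZMod 4) :=
              (ZMod.natCast_rightInverse _).symm
          _ = 0 := by rw [h0]; rfl
      · right
        calc w.right.toAdd = ((w.right.toAdd.val : ℕ) : ZMod 4) :=
              (ZMod.natCast_rightInverse _).symm
          _ = 2 := by rw [h2]; rfl
  · rintro ⟨⟨u, hu⟩, hi⟩ g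
    have hteq : t k ^ (w.right.toAdd.val) = 1 := by
      rcases hi with h0 | h2
      · rw [h0, ZMod.val_zero, pow_zero]
      · rw [h2]
        exact t_pow_even k (by decide)
    refine SemidirectProduct.ext ?_ ?_
    · apply Multiplicative.toAdd.injective
      rw [ml, ml, hu, hteq, t_pow_mul_even, one_mul]
      ring
    · apply Multiplicative.toAdd.injective
      rw [mr, mr]
      ring

lemma C1_mem_center : C1 k ∈ Subgroup.center (K k) := by
  rw [mem_center_iff']
  exact ⟨⟨1, by rw [mul_one]; rfl⟩, Or.inl rfl⟩

lemma C2_mem_center : C2 k ∈ Subgroup.center (K k) := by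
  rw [mem_center_iff']
  exact ⟨⟨0, by rw [mul_zero]; rfl⟩, Or.inr rfl⟩

lemma C1_pow (n : ℕ) : C1 k ^ n
    = SemidirectProduct.inl (.ofAdd (2 * ((n : ℕ) : ZMod (2 ^ (k+2))))) := by
  rw [C1, ← map_pow]
  exact congrArg _ (by rw [← ofAdd_nsmul, nsmul_eq_mul, mul_comm])

lemma C2_pow (n : ℕ) : C2 k ^ n
    = SemidirectProduct.inr (.ofAdd (2 * ((n : ℕ) : ZMod 4))) := by
  rw [C2, ← map_pow]
  exact congrArg _ (by rw [← ofAdd_nsmul, nsmul_eq_mul, mul_comm])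

lemma center_K : Subgroup.center (K k) = Subgroup.closure {C1 k, C2 k} := by
  apply le_antisymm
  · intro w hw
    rw [mem_center_iff'] at hw
    obtain ⟨⟨u, hu⟩, hi⟩ := hw
    have hw1 : w = SemidirectProduct.inl w.left * SemidirectProduct.inr w.right := by
      rw [← SemidirectProduct.mk_eq_inl_mul_inr]
    have hmem1 : SemidirectProduct.inl (φ := phi k) w.left ∈ Subgroup.closure {C1 k, C2 k} := by
      have h5 : w.left = Multiplicative.ofAdd (2 * u) := by
        apply Multiplicative.toAdd.injective
        rw [hu]
        rfl
      have : SemidirectProduct.inl (φ := phi k) w.left = C1 k ^ (u.val) := by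
        rw [C1_pow, ZMod.natCast_rightInverse u, h5]
      rw [this]
      exact pow_mem (Subgroup.subset_closure (Set.mem_insert _ _)) _
    have hmem2 : SemidirectProduct.inr (φ := phi k) w.right ∈ Subgroup.closure {C1 k, C2 k} := by
      rcases hi with h0 | h2
      · have : w.right = 1 := by
          apply Multiplicative.toAdd.injective
          rw [h0]; rfl
        rw [this, map_one]
        exact one_mem _
      · have h6 : w.right = Multiplicative.ofAdd (2 : ZMod 4) := by
          apply Multiplicative.toAdd.injective
          rw [h2]
          rfl
        have : SemidirectProduct.inr (φ := phi k) w.right = C2 k := by rw [h6, C2]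
        rw [this]
        exact Subgroup.subset_closure (Set.mem_insert_of_mem _ rfl)
    rw [hw1]
    exact mul_mem hmem1 hmem2
  · rw [Subgroup.closure_le]
    rintro w hw
    rcases hw with h | h
    · subst h; exact C1_mem_center k
    · rw [Set.mem_singleton_iff] at h; subst h; exact C2_mem_center k

end
end G1test

namespace G1test
section
variable (k : ℕ)

lemma C1_ord : C1 k ^ (2 ^ (k + 1)) = 1 := by
  rw [C1_pow]
  have h : 2 * ((2 ^ (k+1) : ℕ) : ZMod (2 ^ (k+2))) = 0 := by
    push_cast
    rw [show (2 : ZMod (2^(k+2))) * 2 ^ (k+1) = 2 ^ (k+2) from by ring, two_pow_top]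
  rw [h]
  exact map_one _

lemma C2_ord : C2 k ^ 2 = 1 := by
  rw [C2_pow]
  rw [show 2 * ((2 : ℕ) : ZMod 4) = 0 from by decide]
  exact map_one _

lemma comm_C1C2 (x : Multiplicative (ZMod (2 ^ (k+1)))) (y : Multiplicative (ZMod 2)) :
    Commute (G1aux.zmodPowHom (2^(k+1)) (C1 k) (C1_ord k) x)
      (G1aux.zmodPowHom 2 (C2 k) (C2_ord k) y) :=
  (Subgroup.mem_center_iff.mp (pow_mem (C2_mem_center k) _) _)

def psi : Multiplicative (ZMod (2 ^ (k+1))) × Multiplicative (ZMod 2) →* K k :=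
  MonoidHom.noncommCoprod (G1aux.zmodPowHom (2^(k+1)) (C1 k) (C1_ord k))
    (G1aux.zmodPowHom 2 (C2 k) (C2_ord k)) (comm_C1C2 k)

lemma psi_pair (x : ZMod (2 ^ (k+1))) (y : ZMod 2) :
    psi k (.ofAdd x, .ofAdd y)
      = ⟨.ofAdd (2 * ((x.val : ℕ) : ZMod (2 ^ (k+2)))), .ofAdd (2 * ((y.val : ℕ) : ZMod 4))⟩ := by
  show C1 k ^ x.val * C2 k ^ y.val = _
  rw [C1_pow, C2_pow]
  exact (SemidirectProduct.mk_eq_inl_mul_inr _ _).symm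

lemma psi_inj : Function.Injective (psi k) := by
  rw [injective_iff_map_eq_one]
  rintro ⟨x, y⟩ h
  rw [show ((x, y) : Multiplicative (ZMod (2 ^ (k+1))) × Multiplicative (ZMod 2))
    = (.ofAdd x.toAdd, .ofAdd y.toAdd) from rfl, psi_pair] at h
  have hL : 2 * ((x.toAdd.val : ℕ) : ZMod (2 ^ (k+2))) = 0 := by
    have := congrArg (fun w => (SemidirectProduct.left w).toAdd) h
    simpa using this
  have hR : 2 * ((y.toAdd.val : ℕ) : ZMod 4) = 0 := by
    have := congrArg (fun w => (SemidirectProduct.right w).toAdd) h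
    simpa using this
  have hx : x.toAdd.val = 0 := by
    have h1 : ((2 * x.toAdd.val : ℕ) : ZMod (2 ^ (k+2))) = 0 := by push_cast; exact hL
    rw [ZMod.natCast_eq_zero_iff] at h1
    have hlt : x.toAdd.val < 2 ^ (k+1) := ZMod.val_lt _
    have h2 : 2 ^ (k+2) = 2 * 2 ^ (k+1) := by rw [pow_succ']
    have := Nat.eq_zero_of_dvd_of_lt h1 (by omega)
    omega
  have hy : y.toAdd.val = 0 := by
    have h1 : ((2 * y.toAdd.val : ℕ) : ZMod 4) = 0 := by push_cast; exact hR
    rw [ZMod.natCast_eq_zero_iff] at h1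
    have hlt : y.toAdd.val < 2 := ZMod.val_lt _
    have := Nat.eq_zero_of_dvd_of_lt h1 (by omega)
    omega
  have hx' : x = 1 := Multiplicative.toAdd.injective ((ZMod.val_eq_zero _).mp hx)
  have hy' : y = 1 := Multiplicative.toAdd.injective ((ZMod.val_eq_zero _).mp hy)
  rw [hx', hy']
  rfl

lemma psi_range : (psi k).range = Subgroup.center (K k) := by
  apply le_antisymm
  · rintro w ⟨⟨x, y⟩, rfl⟩
    exact mul_mem (pow_mem (C1_mem_center k) _) (pow_mem (C2_mem_center k) _)
  · intro w hw
    rw [mem_center_iff'] at hw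
    obtain ⟨⟨u, hu⟩, hi⟩ := hw
    have hleft : Multiplicative.ofAdd
        (2 * ((((u.val : ℕ) : ZMod (2 ^ (k+1))).val : ℕ) : ZMod (2^(k+2)))) = w.left := by
      apply Multiplicative.toAdd.injective
      show 2 * ((((u.val : ℕ) : ZMod (2 ^ (k+1))).val : ℕ) : ZMod (2^(k+2))) = w.left.toAdd
      rw [hu, ZMod.val_natCast]
      have key : ((2 * (u.val % 2 ^ (k+1)) : ℕ) : ZMod (2 ^ (k+2)))
          = ((2 * u.val : ℕ) : ZMod (2 ^ (k+2))) := by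
        apply (ZMod.natCast_eq_natCast_iff _ _ _).mpr
        have h3 := (Nat.mod_modEq u.val (2 ^ (k+1))).mul_left' 2
        rwa [← pow_succ'] at h3
      calc 2 * ((u.val % 2 ^ (k+1) : ℕ) : ZMod (2^(k+2)))
          = ((2 * (u.val % 2 ^ (k+1)) : ℕ) : ZMod (2^(k+2))) := by push_cast; ring
        _ = ((2 * u.val : ℕ) : ZMod (2^(k+2))) := key
        _ = 2 * ((u.val : ℕ) : ZMod (2^(k+2))) := by push_cast; ring
        _ = 2 * u := by rw [ZMod.natCast_rightInverse u]
    rcases hi with h0 | h2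
    · refine ⟨(.ofAdd ((u.val : ℕ) : ZMod (2 ^ (k+1))), .ofAdd 0), ?_⟩
      rw [psi_pair]
      refine SemidirectProduct.ext (hleft) ?_
      apply Multiplicative.toAdd.injective
      show 2 * (((0 : ZMod 2).val : ℕ) : ZMod 4) = w.right.toAdd
      rw [h0]
      decide
    · refine ⟨(.ofAdd ((u.val : ℕ) : ZMod (2 ^ (k+1))), .ofAdd 1), ?_⟩
      rw [psi_pair]
      refine SemidirectProduct.ext (hleft) ?_
      apply Multiplicative.toAdd.injective
      show 2 * (((1 : ZMod 2).val : ℕ) : ZMod 4) = w.right.toAdd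
      rw [h2]
      decide

noncomputable def centerEquiv :
    Subgroup.center (K k) ≃* Multiplicative (ZMod (2 ^ (k+1))) × Multiplicative (ZMod 2) := by
  have hmem : ∀ p, psi k p ∈ Subgroup.center (K k) := by
    intro p
    rw [← psi_range]
    exact ⟨p, rfl⟩
  exact (MulEquiv.ofBijective ((psi k).codRestrict (Subgroup.center (K k)) hmem)
    ⟨fun p q hpq => psi_inj k (congrArg Subtype.val hpq),
     fun w => by
       have hw : (w : K k) ∈ (psi k).range := by rw [psi_range]; exact w.2
       obtain ⟨p, hp⟩ := hw
       exact ⟨p, Subtype.ext hp⟩⟩).symm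

lemma card_K : Nat.card (K k) = 2 ^ (k + 4) := by
  have e : K k ≃ (ZMod (2^(k+2)) × ZMod 4) :=
    ⟨fun w => (w.left.toAdd, w.right.toAdd), fun p => ⟨.ofAdd p.1, .ofAdd p.2⟩,
      fun w => rfl, fun p => rfl⟩
  rw [Nat.card_congr e, Nat.card_prod, Nat.card_zmod, Nat.card_zmod]
  rw [show (4:ℕ) = 2^2 from rfl, ← pow_add]
  norm_num

end
end G1test

namespace G1aux

lemma comm_map_of_iso {G H : Type*} [Group G] [Group H] (e : G ≃* H) :
    Subgroup.map e.symm.toMonoidHom (commutator H) = commutator G := by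
  rw [commutator_def, commutator_def, Subgroup.map_commutator,
    Subgroup.map_top_of_surjective _ e.symm.surjective]

lemma center_map_of_iso {G H : Type*} [Group G] [Group H] (e : G ≃* H) :
    Subgroup.map e.toMonoidHom (Subgroup.center G) = Subgroup.center H := by
  ext h
  simp only [Subgroup.mem_map]
  constructor
  · rintro ⟨g, hg, rfl⟩
    rw [Subgroup.mem_center_iff]
    intro y
    have h1 := Subgroup.mem_center_iff.mp hg (e.symm y)
    have h2 := congrArg e h1
    simpa [map_mul] using h2
  · intro hh
    refine ⟨e.symm h, ?_, by simp⟩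
    rw [Subgroup.mem_center_iff]
    intro y
    have h1 := Subgroup.mem_center_iff.mp hh (e y)
    have h2 := congrArg e.symm h1
    simpa [map_mul] using h2

end G1aux

namespace G1test
section
variable (k : ℕ)

lemma rho_A : rhoHom k (A k) = a k := by
  rw [A]
  simp only [rhoHom, SemidirectProduct.lift_inl]
  show a k ^ ((1 : ZMod (2^(k+2))).val) = a k
  rw [show ((1 : ZMod (2^(k+2)))) = ((1:ℕ) : ZMod (2^(k+2))) from by push_cast; rfl,
    ZMod.val_cast_of_lt (by have := Nat.one_lt_two_pow_iff (n := k+2); omega), pow_one]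

lemma rho_B : rhoHom k (B k) = b k := by
  rw [B]
  simp only [rhoHom, SemidirectProduct.lift_inr]
  show b k ^ ((1 : ZMod 4).val) = b k
  rw [show ((1 : ZMod 4)).val = 1 from by decide, pow_one]

lemma eSymm_A : (eIso k).symm (A k) = a k := rho_A k
lemma eSymm_B : (eIso k).symm (B k) = b k := rho_B k
lemma e_a : eIso k (a k) = A k := PresentedGroup.toGroup.of (relhold k)
lemma e_b : eIso k (b k) = B k := PresentedGroup.toGroup.of (relhold k)

lemma gen_eq : (SemidirectProduct.inl (.ofAdd (s k)) : K k) = A k ^ (2 ^ (k+1)) := by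
  rw [A_pow]
  have : ((2 ^ (k+1) : ℕ) : ZMod (2 ^ (k+2))) = s k := by rw [s]; push_cast; ring
  rw [this]

lemma main1 : Nat.card (G k) = 2 ^ (k + 4) := by
  rw [Nat.card_congr (eIso k).toEquiv, card_K]

lemma main2 : commutator (G k) = Subgroup.zpowers (a k ^ (2 ^ (k+1))) := by
  rw [← G1aux.comm_map_of_iso (eIso k), commutator_K, Zs, MonoidHom.map_zpowers, gen_eq,
    map_pow]
  rw [show (eIso k).symm.toMonoidHom (A k) = a k from eSymm_A k]

lemma main3 : Nat.card (commutator (G k)) = 2 := by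
  rw [main2, Nat.card_zpowers]
  have h1 : orderOf (eIso k (a k ^ (2 ^ (k+1)))) = orderOf (a k ^ (2 ^ (k+1))) :=
    orderOf_injective (eIso k).toMonoidHom (eIso k).injective _
  rw [← h1, map_pow, e_a, ← gen_eq, order_gen]

lemma C1_eq : C1 k = A k ^ 2 := by
  rw [A_pow, C1]
  norm_num

lemma C2_eq : C2 k = B k ^ 2 := by
  rw [B_pow, C2]
  norm_num

lemma main4 : Subgroup.center (G k) = Subgroup.closure {a k ^ 2, b k ^ 2} := by
  rw [← G1aux.center_map_of_iso (eIso k).symm, center_K, MonoidHom.map_closure]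
  congr 1
  rw [Set.image_insert_eq, Set.image_singleton, C1_eq, C2_eq]
  rw [show (eIso k).symm.toMonoidHom (A k ^ 2) = a k ^ 2 from by
    rw [map_pow, show (eIso k).symm.toMonoidHom (A k) = a k from eSymm_A k]]
  rw [show (eIso k).symm.toMonoidHom (B k ^ 2) = b k ^ 2 from by
    rw [map_pow, show (eIso k).symm.toMonoidHom (B k) = b k from eSymm_B k]]

lemma main5 : Nonempty (Subgroup.center (G k)
    ≃* Multiplicative (ZMod (2 ^ (k+1))) × Multiplicative (ZMod 2)) := by
  refine ⟨((MulEquiv.subgroupCongr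
      (G1aux.center_map_of_iso (eIso k).symm)).symm.trans
    ((MulEquiv.subgroupMap (eIso k).symm (Subgroup.center (K k))).symm)).trans
    (centerEquiv k)⟩

lemma comm_le_center : commutator (G k) ≤ Subgroup.center (G k) := by
  rw [main2, main4]
  refine Subgroup.zpowers_le.mpr ?_
  rw [show (2:ℕ)^(k+1) = 2 * 2^k from by rw [pow_succ'], pow_mul]
  exact pow_mem (Subgroup.subset_closure (Set.mem_insert _ _)) _

lemma G_nontrivial : (⊤ : Subgroup (G k)) ≠ ⊥ := by
  intro hcon
  have hsub : ∀ g : G k, g = 1 := fun g => by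
    have hg : g ∈ (⊥ : Subgroup (G k)) := hcon ▸ Subgroup.mem_top g
    simpa using hg
  have hcard : Nat.card (G k) = 1 :=
    Nat.card_eq_one_iff_unique.mpr ⟨⟨fun u v => by rw [hsub u, hsub v]⟩, ⟨1⟩⟩
  rw [main1 k] at hcard
  have : 1 < 2 ^ (k+4) := Nat.one_lt_two_pow_iff.mpr (by omega)
  omega

lemma comm_ne_bot : commutator (G k) ≠ ⊥ := by
  intro hcon
  have := main3 k
  rw [hcon, Subgroup.card_bot] at this
  omega

lemma lcs2 : (⊤ : Subgroup (G k)).lowerCentralSeries 2 = ⊥ := by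
  show ⁅(⊤ : Subgroup (G k)).lowerCentralSeries 1, ⊤⁆ = ⊥
  rw [Subgroup.top_lowerCentralSeries_one, Subgroup.commutator_eq_bot_iff_le_centralizer]
  refine (comm_le_center k).trans ?_
  have : ((⊤ : Subgroup (G k)) : Set (G k)) = Set.univ := by simp
  rw [this]
  exact le_of_eq Subgroup.centralizer_univ.symm

end
end G1test

namespace G1test
section
variable (k : ℕ)

lemma main6 : nilClass (G k) = 2 := by
  rw [nilClass]
  apply le_antisymm
  · exact Nat.sInf_le (lcs2 k)
  · have hne : {n : ℕ | (⊤ : Subgroup (G k)).lowerCentralSeries n = ⊥}.Nonempty := ⟨2, lcs2 k⟩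
    refine le_csInf hne ?_
    intro n hn
    by_contra hlt
    push_neg at hlt
    interval_cases n
    · exact G_nontrivial k (by rw [← Subgroup.lowerCentralSeries_zero (⊤ : Subgroup (G k))]; exact hn)
    · exact comm_ne_bot k (by rw [← Subgroup.top_lowerCentralSeries_one]; exact hn)

end
end G1test


/-- For `m ≥ 4`, the group `G₁` has order `2^m`, commutator subgroup
`⟨a^{2^{m-3}}⟩` of order 2, center `⟨a², b²⟩ ≅ C_{2^{m-3}} × C₂`, and
nilpotency class 2. -/
theorem G1_invariants (m : ℕ) (hm : 4 ≤ m) :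
    let G := PresentedGroup (G1rels m)
    let a : G := PresentedGroup.of 0
    let b : G := PresentedGroup.of 1
    Nat.card G = 2 ^ m
    ∧ commutator G = Subgroup.zpowers (a ^ (2 ^ (m - 3)))
    ∧ Nat.card (commutator G) = 2
    ∧ Subgroup.center G = Subgroup.closure {a ^ 2, b ^ 2}
    ∧ Nonempty (Subgroup.center G
        ≃* Multiplicative (ZMod (2 ^ (m - 3))) × Multiplicative (ZMod 2))
    ∧ nilClass G = 2 := by
  obtain ⟨k, rfl⟩ : ∃ k, m = k + 4 := ⟨m - 4, by omega⟩
  intro G a b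
  exact ⟨G1test.main1 k, G1test.main2 k, G1test.main3 k, G1test.main4 k,
    G1test.main5 k, G1test.main6 k⟩
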